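/- Assume the Harnack inequality: for every nonnegative solution w of the linear equation ∂ₜw − ν∂ₓ²w + ∂ₓ(aw) = 0 on [0,T] × S one has θ · max_x w(T/2, x) ≤ min_x w(T, x) for some θ ∈ (0,1], and assume the L¹ norm of any solution is nonincreasing in time. Let w₀ ∈ L¹(S) have zero mean, decompose w₀ = w₀⁺ − w₀⁻ into positive and negative parts, let w^± be the solutions with initial data w₀^±, and w = w⁺ − w⁻. Then |w(T)|_{L¹} ≤ q |w₀|_{L¹} with q = max{1/2, 1 − θ/2}. -/
import Mathlib


open Real intervalIntegral

/-- the Harnack inequality together with L¹ non-expansion yields the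
contraction `|w(T)|₁ ≤ max{1/2, 1 − θ/2} |w₀|₁` for the decomposition
`w = w⁺ − w⁻` into evolutions of the positive and negative parts. -/
theorem harnack_contraction
    (T θ : ℝ) (hT : 0 < T) (hθ : 0 < θ) (hθ1 : θ ≤ 1)
    (w₀ : ℝ → ℝ) (wp wm : ℝ → ℝ → ℝ)
    (hint : ∀ t, IntervalIntegrable (wp t) MeasureTheory.volume 0 1 ∧
                 IntervalIntegrable (wm t) MeasureTheory.volume 0 1)
    (hint0 : IntervalIntegrable w₀ MeasureTheory.volume 0 1)
    (hinitp : ∀ x, wp 0 x = max (w₀ x) 0)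
    (hinitm : ∀ x, wm 0 x = max (-(w₀ x)) 0)
    (hnonneg : ∀ t x, 0 ≤ wp t x ∧ 0 ≤ wm t x)
    -- Harnack inequality for the nonnegative solutions w⁺ and w⁻ :
    (hharnackp : ∀ x y, θ * wp (T/2) x ≤ wp T y)
    (hharnackm : ∀ x y, θ * wm (T/2) x ≤ wm T y)
    -- equality of masses (zero mean of w) :
    (hmass : ∀ t, (∫ x in (0:ℝ)..1, wp t x) = ∫ x in (0:ℝ)..1, wm t x)
    -- L¹ non-expansion for w⁺, w⁻ and their difference :
    (hnexp : ∀ s t : ℝ, s ≤ t → (∫ x in (0:ℝ)..1, wp t x) ≤ (∫ x in (0:ℝ)..1, wp s x) ∧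
        (∫ x in (0:ℝ)..1, wm t x) ≤ ∫ x in (0:ℝ)..1, wm s x)
    (hnexpd : ∀ s t : ℝ, s ≤ t →
        (∫ x in (0:ℝ)..1, |wp t x - wm t x|) ≤ ∫ x in (0:ℝ)..1, |wp s x - wm s x|) :
    (∫ x in (0:ℝ)..1, |wp T x - wm T x|) ≤
      max (1/2) (1 - θ/2) * ∫ x in (0:ℝ)..1, |w₀ x| := by
  set m : ℝ → ℝ := fun t => ∫ x in (0:ℝ)..1, wp t x with hm
  -- lower bound from Harnack: θ * m (T/2) ≤ wp T y
  have hlowp : ∀ y, θ * m (T/2) ≤ wp T y := by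
    intro y
    have h1 : (∫ x in (0:ℝ)..1, θ * wp (T/2) x) ≤ ∫ x in (0:ℝ)..1, wp T y := by
      apply intervalIntegral.integral_mono_on (by norm_num)
        (((hint (T/2)).1.smul θ))
        (intervalIntegrable_const)
      intro x _
      exact hharnackp x y
    simpa [intervalIntegral.integral_const_mul] using h1
  have hlowm : ∀ y, θ * m (T/2) ≤ wm T y := by
    intro y
    have h1 : (∫ x in (0:ℝ)..1, θ * wm (T/2) x) ≤ ∫ x in (0:ℝ)..1, wm T y := by
      apply intervalIntegral.integral_mono_on (by norm_num)
        (((hint (T/2)).2.smul θ))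
        (intervalIntegrable_const)
      intro x _
      exact hharnackm x y
    rw [hm]
    simp only [hmass (T/2)]
    simpa [intervalIntegral.integral_const_mul] using h1
  -- pointwise bound
  have hpt : ∀ x, |wp T x - wm T x| ≤ wp T x + wm T x - 2 * (θ * m (T/2)) := by
    intro x
    have h1 := hlowp x
    have h2 := hlowm x
    rw [abs_le]
    constructor <;> nlinarith
  -- integrate
  have hintT : IntervalIntegrable (fun x => |wp T x - wm T x|) MeasureTheory.volume 0 1 :=
    ((hint T).1.sub (hint T).2).abs
  have hintR : IntervalIntegrable (fun x => wp T x + wm T x - 2 * (θ * m (T/2)))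
      MeasureTheory.volume 0 1 :=
    ((hint T).1.add (hint T).2).sub intervalIntegrable_const
  have hstep : (∫ x in (0:ℝ)..1, |wp T x - wm T x|) ≤ 2 * m T - 2 * (θ * m (T/2)) := by
    have h1 : (∫ x in (0:ℝ)..1, |wp T x - wm T x|) ≤
        ∫ x in (0:ℝ)..1, (wp T x + wm T x - 2 * (θ * m (T/2))) :=
      intervalIntegral.integral_mono_on (by norm_num) hintT hintR (fun x _ => hpt x)
    have h2 : (∫ x in (0:ℝ)..1, (wp T x + wm T x - 2 * (θ * m (T/2)))) =
        2 * m T - 2 * (θ * m (T/2)) := by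
      rw [intervalIntegral.integral_sub ((hint T).1.add (hint T).2) intervalIntegrable_const,
        intervalIntegral.integral_add (hint T).1 (hint T).2]
      simp [hm, ← hmass T]
      ring
    linarith [h1, h2.le, h2.ge]
  -- monotonicity of masses
  have hT2 : (0:ℝ) ≤ T/2 := by linarith
  have hm1 : m T ≤ m (T/2) := (hnexp (T/2) T (by linarith)).1
  have hm2 : m (T/2) ≤ m 0 := (hnexp 0 (T/2) hT2).1
  -- initial L¹ norm equals 2 m 0
  have hinit : (∫ x in (0:ℝ)..1, |w₀ x|) = 2 * m 0 := by
    have hpw : ∀ x, |w₀ x| = wp 0 x + wm 0 x := by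
      intro x
      rw [hinitp x, hinitm x]
      rcases le_total (w₀ x) 0 with h | h
      · rw [abs_of_nonpos h, max_eq_right h, max_eq_left (by linarith)]; ring
      · rw [abs_of_nonneg h, max_eq_left h, max_eq_right (by linarith)]; ring
    calc (∫ x in (0:ℝ)..1, |w₀ x|) = ∫ x in (0:ℝ)..1, (wp 0 x + wm 0 x) := by
          apply intervalIntegral.integral_congr
          intro x _
          exact hpw x
      _ = 2 * m 0 := by
          rw [intervalIntegral.integral_add (hint 0).1 (hint 0).2, hm, ← hmass 0]; ring
  have hmhalf_nonneg : 0 ≤ m (T/2) := by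
    apply intervalIntegral.integral_nonneg (by norm_num)
    intro x _
    exact (hnonneg (T/2) x).1
  have hm0_nonneg : 0 ≤ m 0 := le_trans hmhalf_nonneg hm2
  have hkey : (∫ x in (0:ℝ)..1, |wp T x - wm T x|) ≤ (1 - θ) * (2 * m 0) := by
    have : 2 * m T - 2 * (θ * m (T/2)) ≤ (1 - θ) * (2 * m (T/2)) := by nlinarith
    nlinarith [hstep, mul_le_mul_of_nonneg_left hm2 (by linarith : (0:ℝ) ≤ 2 * (1 - θ))]
  rw [hinit]
  have hmax : (1 - θ) ≤ max (1/2) (1 - θ/2) := le_trans (by linarith) (le_max_right _ _)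
  calc (∫ x in (0:ℝ)..1, |wp T x - wm T x|) ≤ (1 - θ) * (2 * m 0) := hkey
    _ ≤ max (1/2) (1 - θ/2) * (2 * m 0) :=
        mul_le_mul_of_nonneg_right hmax (by linarith)
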